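/- Fix a monomial order ≺ on ℕ^p whose initial segments are finite. Let p ≥ 2, let q be a positive integer, let j ∈ {1, …, p}, and let S = ℕ^p \ {e_j, 2e_j, …, (q−1)e_j}. Then S is an ℕ^p-semigroup satisfying the extended Wilf conjecture: n(S)·e(S) ≥ N(Fb(S)) + 1. -/

import Mathlib

/-- `S ⊆ ℕ^p` contains `0` and is closed under addition. -/
def IsSubmonoidSet {p : ℕ} (S : Set (Fin p → ℕ)) : Prop :=
  (0 : Fin p → ℕ) ∈ S ∧ ∀ x ∈ S, ∀ y ∈ S, x + y ∈ S

/-- `s` is a minimal generator of `S`: it is a nonzero element of `S` that is not a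
sum of two nonzero elements of `S`. -/
def IsMinGen {p : ℕ} (S : Set (Fin p → ℕ)) (s : Fin p → ℕ) : Prop :=
  s ∈ S ∧ s ≠ 0 ∧ ∀ a ∈ S, ∀ b ∈ S, a ≠ 0 → b ≠ 0 → a + b ≠ s

/-- The (unique) minimal generating set of `S`. -/
def minGens {p : ℕ} (S : Set (Fin p → ℕ)) : Set (Fin p → ℕ) :=
  {s | IsMinGen S s}

/-- `prec` is (the strict part of) a monomial order on `ℕ^p` all of whose initial
segments are finite. -/
def IsMonomialOrder {p : ℕ} (prec : (Fin p → ℕ) → (Fin p → ℕ) → Prop) : Prop :=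
  (∀ a, ¬ prec a a) ∧
  (∀ a b c, prec a b → prec b c → prec a c) ∧
  (∀ a b, a ≠ b → prec a b ∨ prec b a) ∧
  (∀ a b c, prec a b → prec (a + c) (b + c)) ∧
  (∀ c, c ≠ (0 : Fin p → ℕ) → prec 0 c) ∧
  (∀ a, {b | prec b a}.Finite)

/-- The semigroup $ℕ^p \setminus \{e_j, 2e_j, …, (q-1)e_j\}$. -/
def S12 (p q : ℕ) (j : Fin p) : Set (Fin p → ℕ) :=
  {x | ¬ ∃ m : ℕ, 1 ≤ m ∧ m ≤ q - 1 ∧ x = m • Pi.single j 1}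

lemma S12_notMem_iff {p q : ℕ} {j : Fin p} {x : Fin p → ℕ} :
    x ∉ S12 p q j ↔ (1 ≤ x j ∧ x j ≤ q - 1 ∧ ∀ i, i ≠ j → x i = 0) := by
  constructor
  · intro h
    rw [S12, Set.mem_setOf_eq, not_not] at h
    obtain ⟨m, h1, h2, rfl⟩ := h
    refine ⟨by simpa using h1, by simpa using h2, fun i hi => by simp [Pi.single_eq_of_ne hi]⟩
  · rintro ⟨h1, h2, h3⟩
    rw [S12, Set.mem_setOf_eq, not_not]
    refine ⟨x j, h1, h2, funext fun i => ?_⟩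
    by_cases hij : i = j
    · subst hij; simp
    · simp [h3 i hij, Pi.single_eq_of_ne hij]

lemma S12_mem_iff {p q : ℕ} {j : Fin p} {x : Fin p → ℕ} :
    x ∈ S12 p q j ↔ ¬ (1 ≤ x j ∧ x j ≤ q - 1 ∧ ∀ i, i ≠ j → x i = 0) := by
  constructor
  · intro h hP
    exact (S12_notMem_iff.mpr hP) h
  · intro h
    by_contra h'
    exact h (S12_notMem_iff.mp h')

lemma axis_minGen {p q : ℕ} (hq2 : 2 ≤ q) {j : Fin p} {m : ℕ} (h1 : q ≤ m)
    (h2 : m ≤ 2 * q - 1) : IsMinGen (S12 p q j) (m • Pi.single j 1) := by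
  refine ⟨S12_mem_iff.mpr ?_, ?_, ?_⟩
  · rintro ⟨g1, g2, -⟩
    simp at g1 g2; omega
  · intro h
    have := congrFun h j
    simp at this; omega
  · intro a ha b hb ha0 hb0 hab
    have hoff : ∀ i, i ≠ j → a i = 0 ∧ b i = 0 := by
      intro i hi
      have := congrFun hab i
      simp [Pi.single_eq_of_ne hi] at this
      omega
    have haj : q ≤ a j := by
      have hz : ∀ i, i ≠ j → a i = 0 := fun i hi => (hoff i hi).1
      by_contra hlt
      push_neg at hlt
      rcases Nat.eq_zero_or_pos (a j) with h0 | h0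
      · exact ha0 (funext fun i => by
          by_cases hij : i = j
          · subst hij; simpa using h0
          · simpa using hz i hij)
      · exact (S12_mem_iff.mp ha) ⟨h0, by omega, hz⟩
    have hbj : q ≤ b j := by
      have hz : ∀ i, i ≠ j → b i = 0 := fun i hi => (hoff i hi).2
      by_contra hlt
      push_neg at hlt
      rcases Nat.eq_zero_or_pos (b j) with h0 | h0
      · exact hb0 (funext fun i => by
          by_cases hij : i = j
          · subst hij; simpa using h0
          · simpa using hz i hij)
      · exact (S12_mem_iff.mp hb) ⟨h0, by omega, hz⟩
    have := congrFun hab j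
    simp at this
    omega

lemma off_minGen {p q : ℕ} {j i₀ : Fin p} (hi₀ : i₀ ≠ j) :
    IsMinGen (S12 p q j) (Pi.single i₀ 1) := by
  refine ⟨S12_mem_iff.mpr ?_, ?_, ?_⟩
  · rintro ⟨-, -, g3⟩
    have := g3 i₀ hi₀
    simp at this
  · intro h
    have := congrFun h i₀
    simp at this
  · intro a ha b hb ha0 hb0 hab
    have h1 := fun i => congrFun hab i
    obtain ⟨ia, hia⟩ : ∃ i, a i ≠ 0 := by
      by_contra h; push_neg at h; exact ha0 (funext fun i => h i)
    obtain ⟨ib, hib⟩ : ∃ i, b i ≠ 0 := by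
      by_contra h; push_neg at h; exact hb0 (funext fun i => h i)
    have hia' : ia = i₀ := by
      by_contra hne
      have := h1 ia
      simp only [Pi.add_apply, Pi.single_eq_of_ne hne] at this
      omega
    have hib' : ib = i₀ := by
      by_contra hne
      have := h1 ib
      simp only [Pi.add_apply, Pi.single_eq_of_ne hne] at this
      omega
    rw [hia'] at hia
    rw [hib'] at hib
    have := h1 i₀
    simp only [Pi.add_apply, Pi.single_eq_same] at this
    omega

lemma minGens_finite {p q : ℕ} (hq : 1 ≤ q) (j : Fin p) :
    (minGens (S12 p q j)).Finite := by
  have hsub : minGens (S12 p q j) ⊆ Set.pi Set.univ (fun _ : Fin p => Set.Iic (2 * q)) := by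
    rintro x ⟨hx, hx0, hmin⟩
    rw [Set.mem_univ_pi]
    intro i
    simp only [Set.mem_Iic]
    by_contra hbig
    push_neg at hbig
    by_cases hij : i = j
    · subst hij
      set a : Fin p → ℕ := q • Pi.single i 1 with hadef
      set b : Fin p → ℕ := x - a with hbdef
      have hai : ∀ i', a i' = if i' = i then q else 0 := by
        intro i'
        by_cases h : i' = i
        · subst h; simp [hadef]
        · simp [hadef, Pi.single_eq_of_ne h, if_neg h]
      have hbi : ∀ i', b i' = x i' - a i' := fun i' => rfl
      have ha : a ∈ S12 p q i := by
        refine S12_mem_iff.mpr ?_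
        rintro ⟨-, g2, -⟩
        rw [hai i] at g2
        simp at g2
        omega
      have hb : b ∈ S12 p q i := by
        refine S12_mem_iff.mpr ?_
        rintro ⟨-, g2, -⟩
        rw [hbi i, hai i] at g2
        simp at g2
        omega
      have ha0 : a ≠ 0 := by
        intro h
        have := congrFun h i
        rw [hai i] at this
        simp at this
        omega
      have hb0 : b ≠ 0 := by
        intro h
        have := congrFun h i
        rw [hbi i, hai i] at this
        simp at this
        omega
      have heq : a + b = x := funext fun i' => by
        have h1 := hai i'
        have h2 := hbi i'
        by_cases h : i' = i
        · simp only [Pi.add_apply]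
          rw [h1, h2, h1, if_pos h, h]
          omega
        · simp only [Pi.add_apply]
          rw [h1, h2, h1]
          simp [h]
      exact hmin a ha b hb ha0 hb0 heq
    · set a : Fin p → ℕ := Pi.single i 1 with hadef
      set b : Fin p → ℕ := x - a with hbdef
      have hai : a i = 1 := by simp [hadef]
      have hbi : ∀ i', b i' = x i' - a i' := fun i' => rfl
      have ha : a ∈ S12 p q j := (off_minGen (q := q) hij).1
      have hb : b ∈ S12 p q j := by
        refine S12_mem_iff.mpr ?_
        rintro ⟨-, -, g3⟩
        have := g3 i hij
        rw [hbi i, hai] at this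
        omega
      have ha0 : a ≠ 0 := by
        intro h
        have := congrFun h i
        rw [hai] at this
        simp at this
      have hb0 : b ≠ 0 := by
        intro h
        have := congrFun h i
        rw [hbi i, hai] at this
        simp at this
        omega
      have heq : a + b = x := funext fun i' => by
        have h2 := hbi i'
        by_cases h : i' = i
        · subst h
          simp only [Pi.add_apply]
          rw [h2, hai]
          omega
        · simp only [Pi.add_apply]
          rw [h2, hadef]
          simp [Pi.single_eq_of_ne h]
      exact hmin a ha b hb ha0 hb0 heq
  exact (Set.Finite.pi (fun _ => Set.finite_Iic (2 * q))).subset hsub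

theorem stmt13 {p q : ℕ} (hp : 2 ≤ p) (hq : 1 ≤ q) (j : Fin p)
    (prec : (Fin p → ℕ) → (Fin p → ℕ) → Prop) (hprec : IsMonomialOrder prec)
    (Fb : Fin p → ℕ)
    (hFb : Fb ∉ S12 p q j ∧
      ∀ x : Fin p → ℕ, x ∉ S12 p q j → x ≠ Fb → prec x Fb) :
    IsSubmonoidSet (S12 p q j) ∧
    {x : Fin p → ℕ | x ∉ S12 p q j}.Finite ∧
    {x : Fin p → ℕ | x ∈ S12 p q j ∧ prec x Fb}.ncard
        + {x : Fin p → ℕ | x ∉ S12 p q j}.ncard + 1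
      ≤ {x : Fin p → ℕ | x ∈ S12 p q j ∧ prec x Fb}.ncard
        * (minGens (S12 p q j)).ncard := by
  obtain ⟨hirr, htrans, htot, hadd, hzlt, hfin⟩ := hprec
  have hq2 : 2 ≤ q := by
    obtain ⟨g1, g2, -⟩ := S12_notMem_iff.mp hFb.1
    omega
  -- submonoid
  have hsub : IsSubmonoidSet (S12 p q j) := by
    constructor
    · exact S12_mem_iff.mpr (by rintro ⟨g1, -, -⟩; simp at g1)
    · intro x hx y hy
      refine S12_mem_iff.mpr ?_
      rintro ⟨g1, g2, g3⟩
      have hxz : ∀ i, i ≠ j → x i = 0 := fun i hi => by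
        have := g3 i hi; simp at this; omega
      have hyz : ∀ i, i ≠ j → y i = 0 := fun i hi => by
        have := g3 i hi; simp at this; omega
      have hx' := S12_mem_iff.mp hx
      have hy' := S12_mem_iff.mp hy
      simp only [Pi.add_apply] at g1 g2
      have hxj : x j = 0 := by
        by_contra h
        exact hx' ⟨by omega, by omega, hxz⟩
      have hyj : y j = 0 := by
        by_contra h
        exact hy' ⟨by omega, by omega, hyz⟩
      omega
  -- finiteness of gaps
  have hgapsub : {x : Fin p → ℕ | x ∉ S12 p q j} ⊆
      (fun m => m • Pi.single j 1) '' Set.Icc 1 (q - 1) := by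
    intro x hx
    obtain ⟨g1, g2, g3⟩ := S12_notMem_iff.mp hx
    refine ⟨x j, ⟨g1, g2⟩, (funext fun i => ?_).symm⟩
    by_cases hij : i = j
    · subst hij; simp
    · simp [g3 i hij, Pi.single_eq_of_ne hij]
  have hgapfin : {x : Fin p → ℕ | x ∉ S12 p q j}.Finite :=
    ((Set.finite_Icc 1 (q - 1)).image _).subset hgapsub
  refine ⟨hsub, hgapfin, ?_⟩
  -- genus bound
  have hg : {x : Fin p → ℕ | x ∉ S12 p q j}.ncard ≤ q - 1 := by
    calc {x : Fin p → ℕ | x ∉ S12 p q j}.ncard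
        ≤ ((fun m => m • Pi.single j 1) '' Set.Icc 1 (q - 1)).ncard :=
          Set.ncard_le_ncard hgapsub ((Set.finite_Icc 1 (q - 1)).image _)
      _ ≤ (Set.Icc 1 (q - 1)).ncard := Set.ncard_image_le (Set.finite_Icc _ _)
      _ = q - 1 := by
          rw [← Finset.coe_Icc, Set.ncard_coe_finset, Nat.card_Icc]; omega
  -- n ≥ 1
  set A := {x : Fin p → ℕ | x ∈ S12 p q j ∧ prec x Fb} with hA
  have hAfin : A.Finite := (hfin Fb).subset (fun x hx => hx.2)
  have hn : 1 ≤ A.ncard := by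
    have h0S : (0 : Fin p → ℕ) ∈ S12 p q j := hsub.1
    have hFb0 : Fb ≠ 0 := fun h => hFb.1 (h ▸ h0S)
    have : (0 : Fin p → ℕ) ∈ A := ⟨h0S, hzlt Fb hFb0⟩
    have := Set.ncard_pos hAfin |>.mpr ⟨0, this⟩
    omega
  -- e ≥ q + 1
  obtain ⟨i₀, hi₀⟩ := Fintype.exists_ne_of_one_lt_card (by simpa using (show 1 < p by omega)) j
  have he : q + 1 ≤ (minGens (S12 p q j)).ncard := by
    have hT : insert (Pi.single i₀ 1) ((fun m : ℕ => (m • Pi.single j 1 : Fin p → ℕ)) '' Set.Icc q (2 * q - 1))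
        ⊆ minGens (S12 p q j) := by
      intro x hxmem
      rw [Set.mem_insert_iff] at hxmem
      obtain rfl | ⟨m, ⟨hm1, hm2⟩, rfl⟩ := hxmem
      · exact off_minGen hi₀
      · exact axis_minGen hq2 hm1 hm2
    have himg : ((fun m : ℕ => (m • Pi.single j 1 : Fin p → ℕ)) '' Set.Icc q (2 * q - 1)).ncard = q := by
      rw [Set.ncard_image_of_injOn, ← Finset.coe_Icc, Set.ncard_coe_finset, Nat.card_Icc]
      · omega
      · intro a _ b _ hab
        have := congrFun hab j
        simpa using this
    have hnotmem : (Pi.single i₀ 1 : Fin p → ℕ) ∉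
        (fun m : ℕ => (m • Pi.single j 1 : Fin p → ℕ)) '' Set.Icc q (2 * q - 1) := by
      rintro ⟨m, -, h⟩
      have := congrFun h i₀
      simp [Pi.single_eq_of_ne hi₀] at this
    have hins : (insert (Pi.single i₀ 1 : Fin p → ℕ)
        ((fun m : ℕ => (m • Pi.single j 1 : Fin p → ℕ)) '' Set.Icc q (2 * q - 1))).ncard = q + 1 := by
      rw [Set.ncard_insert_of_notMem hnotmem (((Set.finite_Icc _ _).image _))]
      omega
    calc q + 1 = _ := hins.symm
      _ ≤ (minGens (S12 p q j)).ncard :=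
        Set.ncard_le_ncard hT (minGens_finite hq j)
  -- final arithmetic
  calc A.ncard + {x : Fin p → ℕ | x ∉ S12 p q j}.ncard + 1
      ≤ A.ncard + q := by omega
    _ ≤ A.ncard + A.ncard * q := by nlinarith
    _ = A.ncard * (q + 1) := by ring
    _ ≤ A.ncard * (minGens (S12 p q j)).ncard := Nat.mul_le_mul_left _ he
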